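/- arXiv:2408.06172 — 2 statements merged into one kernel-verified Lean document; each statement's English description precedes it below -/
import Mathlib

section
/- Let n ≥ 1. There exists a constant c₁ > 0 depending only on n with the following property: for every convex body K in ℝ^{n+1} whose support function h is nonnegative on S^n (equivalently, 0 ∈ K), one has ⨍_{S^n} h dθ ≥ c₁ · max_{S^n} h. -/
open MeasureTheory Metric Real
open scoped InnerProductSpace ENNReal Topology

noncomputable section

/-- Euclidean space `ℝ^{n+1}`. -/
abbrev Eu (n : ℕ) : Type := EuclideanSpace ℝ (Fin (n + 1))

/-- The unit sphere `S^n ⊆ ℝ^{n+1}` as a subtype. -/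
abbrev Sph (n : ℕ) : Type := Metric.sphere (0 : Eu n) 1

/-- The spherical Lebesgue (surface) measure on `S^n`. -/
def sphMeas (n : ℕ) : Measure (Sph n) := (volume : Measure (Eu n)).toSphere

/-- The support function of a set `K ⊆ ℝ^{n+1}`. -/
def sfn {n : ℕ} (K : Set (Eu n)) (z : Eu n) : ℝ :=
  sSup ((fun y => ⟪z, y⟫_ℝ) '' K)

/-- The Hessian endomorphism `A(x) = D(∇ h_K)(x)`. -/
def hessA {n : ℕ} (K : Set (Eu n)) (x : Eu n) : Eu n →L[ℝ] Eu n :=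
  fderiv ℝ (gradient (sfn K)) x

/-- The rank-one endomorphism `x ⊗ x : v ↦ ⟨v, x⟩ x`. -/
def tens {n : ℕ} (x : Eu n) : Eu n →L[ℝ] Eu n :=
  (innerSL ℝ x).smulRight x

/-- `det (A(x) + x ⊗ x)`, the reciprocal Gauss curvature `1/𝒦` at `x ∈ S^n`. -/
def rK {n : ℕ} (K : Set (Eu n)) (x : Eu n) : ℝ :=
  LinearMap.det ((hessA K x + tens x : Eu n →L[ℝ] Eu n) : Eu n →ₗ[ℝ] Eu n)

/-- `K` is a smooth, strictly convex body with positive support function. -/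
structure IsSmoothConvexBody {n : ℕ} (K : Set (Eu n)) : Prop where
  compact : IsCompact K
  convex : Convex ℝ K
  interior_nonempty : (interior K).Nonempty
  pos : ∀ x : Sph n, 0 < sfn K x
  smooth : ContDiffOn ℝ (⊤ : ℕ∞) (sfn K) {(0 : Eu n)}ᶜ
  posdef : ∀ x : Sph n, ∀ v : Eu n, v ≠ 0 →
    0 < ⟪(hessA K (x : Eu n) + tens (x : Eu n)) v, v⟫_ℝ

/-- The density `h·det(A + x⊗x)` of the measure `dV` with respect to `dθ`. -/
def dens {n : ℕ} (K : Set (Eu n)) (x : Eu n) : ℝ := sfn K x * rK K x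

/-- The centroid-type point `c(K) = (∫ ∇h_K dV)/(∫ dV)`. -/
def cK {n : ℕ} (K : Set (Eu n)) : Eu n :=
  (∫ x : Sph n, dens K x ∂sphMeas n)⁻¹ •
    ∫ x : Sph n, dens K x • gradient (sfn K) x ∂sphMeas n

/-- The support function of the translated body `K - c(K)`. -/
def tsfn {n : ℕ} (K : Set (Eu n)) (x : Eu n) : ℝ := sfn K x - ⟪x, cK K⟫_ℝ


open Set
open scoped Pointwise

instance (n : ℕ) : IsFiniteMeasure (sphMeas n) := by unfold sphMeas; infer_instance

lemma integrable_cont {n : ℕ} (f : Sph n → ℝ) (hf : Continuous f) :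
    Integrable f (sphMeas n) :=
  hf.integrable_of_hasCompactSupport (IsClosed.isCompact (isClosed_tsupport f))

/-- The cone over the cap `{⟪y,u⟫ > 1/2}` contains a fixed ball. -/
lemma cap_meas (n : ℕ) (u : Eu n) (hu : ‖u‖ = 1) :
    ((n : ℝ≥0∞) + 1) * volume (ball (0 : Eu n) 8⁻¹)
      ≤ sphMeas n {y : Sph n | 2⁻¹ < ⟪(y : Eu n), u⟫_ℝ} := by
  set s : Set (Sph n) := {y : Sph n | 2⁻¹ < ⟪(y : Eu n), u⟫_ℝ} with hs
  have hcont : Continuous fun y : Sph n => ⟪(y : Eu n), u⟫_ℝ :=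
    Continuous.inner continuous_subtype_val continuous_const
  have hms : MeasurableSet s := (isOpen_Ioi.preimage hcont).measurableSet
  have h1 : sphMeas n s = ((n : ℝ≥0∞) + 1) * volume (Ioo (0 : ℝ) 1 • (Subtype.val '' s)) := by
    rw [sphMeas, Measure.toSphere_apply' _ hms, finrank_euclideanSpace_fin]
    push_cast
    ring_nf
  have huu : ⟪u, u⟫_ℝ = 1 := by
    rw [real_inner_self_eq_norm_sq, hu]; norm_num
  have hsub : ball ((3/4 : ℝ) • u) 8⁻¹ ⊆ Ioo (0 : ℝ) 1 • (Subtype.val '' s) := by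
    intro z hz
    have hz' : ‖z - (3/4 : ℝ) • u‖ < 8⁻¹ := by
      simpa [dist_eq_norm] using hz
    have hnz1 : |‖z‖ - 3/4| < 8⁻¹ := by
      have h2 := abs_norm_sub_norm_le z ((3/4 : ℝ) • u)
      have h34 : ‖(3/4 : ℝ) • u‖ = 3/4 := by
        rw [norm_smul, hu]; norm_num
      rw [h34] at h2
      linarith [lt_of_le_of_lt h2 hz']
    have hzlow : (5/8 : ℝ) < ‖z‖ := by
      rcases abs_lt.mp hnz1 with ⟨hl, _⟩; linarith
    have hzhigh : ‖z‖ < 7/8 := by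
      rcases abs_lt.mp hnz1 with ⟨_, hr⟩; linarith
    have hzpos : (0 : ℝ) < ‖z‖ := by linarith
    have hinner : (5/8 : ℝ) ≤ ⟪z, u⟫_ℝ := by
      have hsplit : ⟪z, u⟫_ℝ = ⟪z - (3/4 : ℝ) • u, u⟫_ℝ + 3/4 := by
        rw [inner_sub_left, real_inner_smul_left, huu]; ring
      have hb : |⟪z - (3/4 : ℝ) • u, u⟫_ℝ| ≤ ‖z - (3/4 : ℝ) • u‖ := by
        have h3 := abs_real_inner_le_norm (z - (3/4 : ℝ) • u) u
        simpa [hu] using h3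
      have h4 := (abs_le.mp hb).1
      linarith [hz'.le]
    set y : Eu n := ‖z‖⁻¹ • z with hy
    have hzne : z ≠ 0 := by
      intro h; rw [h, norm_zero] at hzpos; exact lt_irrefl _ hzpos
    have hyn : ‖y‖ = 1 := norm_smul_inv_norm hzne
    have hymem : (⟨y, by simpa [mem_sphere_zero_iff_norm] using hyn⟩ : Sph n) ∈ s := by
      simp only [hs, Set.mem_setOf_eq]
      show (2⁻¹ : ℝ) < ⟪y, u⟫_ℝ
      have hrw : ⟪y, u⟫_ℝ = ‖z‖⁻¹ * ⟪z, u⟫_ℝ := real_inner_smul_left z u ‖z‖⁻¹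
      rw [hrw, ← div_eq_inv_mul, lt_div_iff₀ hzpos]
      nlinarith
    refine Set.mem_smul.mpr ⟨‖z‖, ⟨hzpos, by linarith⟩, y,
      ⟨⟨y, by simpa [mem_sphere_zero_iff_norm] using hyn⟩, hymem, rfl⟩, ?_⟩
    rw [hy, smul_smul, mul_inv_cancel₀ (ne_of_gt hzpos), one_smul]
  calc ((n : ℝ≥0∞) + 1) * volume (ball (0 : Eu n) 8⁻¹)
      = ((n : ℝ≥0∞) + 1) * volume (ball ((3/4 : ℝ) • u) 8⁻¹) := by
        rw [Measure.addHaar_ball_center (volume : Measure (Eu n)) ((3/4 : ℝ) • u)]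
    _ ≤ ((n : ℝ≥0∞) + 1) * volume (Ioo (0 : ℝ) 1 • (Subtype.val '' s)) :=
        mul_le_mul_right (measure_mono hsub) _
    _ = sphMeas n s := h1.symm

/-- Uniform positive lower bound for `∫ max 0 ⟪y,u⟫ dθ` over unit vectors `u`. -/
lemma int_cap_lb (n : ℕ) (u : Eu n) (hu : ‖u‖ = 1) :
    2⁻¹ * (((n : ℝ≥0∞) + 1) * volume (ball (0 : Eu n) 8⁻¹)).toReal
      ≤ ∫ y : Sph n, max 0 ⟪(y : Eu n), u⟫_ℝ ∂sphMeas n := by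
  set f : Sph n → ℝ := fun y => max 0 ⟪(y : Eu n), u⟫_ℝ with hf
  have hcont : Continuous f :=
    continuous_const.max (Continuous.inner continuous_subtype_val continuous_const)
  have hint : Integrable f (sphMeas n) := integrable_cont f hcont
  set s : Set (Sph n) := {y : Sph n | 2⁻¹ < ⟪(y : Eu n), u⟫_ℝ} with hs
  have hms : MeasurableSet s :=
    measurableSet_lt measurable_const
      (Continuous.inner continuous_subtype_val (continuous_const : Continuous fun _ : Sph n => u)).measurable
  have step1 : ∫ y in s, f y ∂sphMeas n ≤ ∫ y, f y ∂sphMeas n :=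
    setIntegral_le_integral hint (Filter.Eventually.of_forall fun y => le_max_left _ _)
  have step2 : (2⁻¹ : ℝ) * ((sphMeas n) s).toReal ≤ ∫ y in s, f y ∂sphMeas n := by
    have : ∫ y in s, (2⁻¹ : ℝ) ∂sphMeas n ≤ ∫ y in s, f y ∂sphMeas n := by
      apply setIntegral_mono_on (integrableOn_const (measure_ne_top _ _))
        hint.integrableOn hms
      intro y hy
      have hy' : (2⁻¹ : ℝ) < ⟪(y : Eu n), u⟫_ℝ := hy
      exact le_max_of_le_right hy'.le
    simpa [setIntegral_const, mul_comm, measureReal_def] using this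
  have step3 : 2⁻¹ * (((n : ℝ≥0∞) + 1) * volume (ball (0 : Eu n) 8⁻¹)).toReal
      ≤ (2⁻¹ : ℝ) * ((sphMeas n) s).toReal := by
    have := ENNReal.toReal_mono (measure_ne_top (sphMeas n) s) (cap_meas n u hu)
    linarith
  linarith

lemma sfn_le_inner {n : ℕ} {K : Set (Eu n)} (hK : IsCompact K) {y₀ : Eu n} (hy₀ : y₀ ∈ K)
    (z : Eu n) : ⟪z, y₀⟫_ℝ ≤ sfn K z := by
  apply le_csSup
  · exact (hK.image (Continuous.inner continuous_const continuous_id)).bddAbove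
  · exact Set.mem_image_of_mem _ hy₀

lemma sfn_exists_max {n : ℕ} {K : Set (Eu n)} (hK : IsCompact K) (hne : K.Nonempty)
    (x : Eu n) : ∃ y₀ ∈ K, sfn K x = ⟪x, y₀⟫_ℝ := by
  obtain ⟨y₀, hy₀K, hmax⟩ := hK.exists_isMaxOn hne
    (show ContinuousOn (fun y : Eu n => ⟪x, y⟫_ℝ) K from
      (Continuous.inner continuous_const continuous_id).continuousOn)
  refine ⟨y₀, hy₀K, ?_⟩
  apply IsGreatest.csSup_eq
  exact ⟨Set.mem_image_of_mem _ hy₀K, by rintro _ ⟨y, hy, rfl⟩; exact hmax hy⟩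

lemma sfn_continuous {n : ℕ} {K : Set (Eu n)} (hK : IsCompact K) (hne : K.Nonempty) :
    Continuous (sfn K) := by
  obtain ⟨R, hR⟩ := hK.isBounded.exists_norm_le
  have key : ∀ z w : Eu n, sfn K z ≤ sfn K w + R * ‖z - w‖ := by
    intro z w
    apply csSup_le (hne.image _)
    rintro _ ⟨y, hy, rfl⟩
    have h1 : ⟪z, y⟫_ℝ = ⟪w, y⟫_ℝ + ⟪z - w, y⟫_ℝ := by
      rw [← inner_add_left]; congr 1; abel
    have h2 : ⟪z - w, y⟫_ℝ ≤ ‖z - w‖ * ‖y‖ := real_inner_le_norm _ _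
    have h3 : ‖z - w‖ * ‖y‖ ≤ ‖z - w‖ * R :=
      mul_le_mul_of_nonneg_left (hR y hy) (norm_nonneg _)
    have h4 : ⟪w, y⟫_ℝ ≤ sfn K w := sfn_le_inner hK hy w
    show ⟪z, y⟫_ℝ ≤ _
    rw [h1]; nlinarith
  have hlip : LipschitzWith (Real.toNNReal R) (sfn K) := by
    apply LipschitzWith.of_dist_le_mul
    intro z w
    rw [Real.dist_eq, dist_eq_norm]
    have hRnn : (0 : ℝ) ≤ R := by
      obtain ⟨y, hy⟩ := hne
      exact (norm_nonneg y).trans (hR y hy)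
    rw [abs_sub_le_iff]
    constructor
    · have := key z w
      have : R * ‖z - w‖ ≤ Real.toNNReal R * ‖z - w‖ := by
        rw [Real.coe_toNNReal R hRnn]
      linarith [key z w, this]
    · have h5 := key w z
      rw [norm_sub_rev z w] at *
      rw [Real.coe_toNNReal R hRnn]
      linarith [key w z]
  exact hlip.continuous

set_option maxHeartbeats 1000000 in
/-- There is `c₁ = c₁(n) > 0` such that, for every convex body `K` with nonnegative
support function on `S^n`, the mean of `h` over `S^n` is at least `c₁ · max h`. -/
theorem average_support_ge_max (n : ℕ) (hn : 1 ≤ n) :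
    ∃ c₁ : ℝ, 0 < c₁ ∧
      ∀ K : Set (Eu n), IsCompact K → Convex ℝ K → (interior K).Nonempty →
        (∀ x : Sph n, 0 ≤ sfn K (x : Eu n)) →
        ∀ x : Sph n, c₁ * sfn K (x : Eu n) ≤ ⨍ y : Sph n, sfn K (y : Eu n) ∂sphMeas n := by
  classical
  set B : ℝ≥0∞ := ((n : ℝ≥0∞) + 1) * volume (ball (0 : Eu n) 8⁻¹) with hB
  have hBne : B ≠ ⊤ := ENNReal.mul_ne_top (by simp) measure_ball_lt_top.ne
  have hB0 : B ≠ 0 := by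
    refine mul_ne_zero (by simp) (measure_ball_pos volume 0 (by norm_num)).ne'
  set m : ℝ := 2⁻¹ * B.toReal with hm
  have hmpos : 0 < m := by
    have := ENNReal.toReal_pos hB0 hBne
    rw [hm]; linarith
  -- total measure is positive and finite
  set T : ℝ := ((sphMeas n) Set.univ).toReal with hT
  have hTpos : 0 < T := by
    have he : ‖(EuclideanSpace.single (0 : Fin (n+1)) (1:ℝ) : Eu n)‖ = 1 := by
      simp [EuclideanSpace.norm_single]
    have h1 : B ≤ (sphMeas n) Set.univ :=
      (cap_meas n _ he).trans (measure_mono (Set.subset_univ _))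
    have h2 : (0 : ℝ≥0∞) < (sphMeas n) Set.univ := lt_of_lt_of_le (hB0.bot_lt) h1
    exact ENNReal.toReal_pos h2.ne' (measure_ne_top _ _)
  refine ⟨m / T, div_pos hmpos hTpos, ?_⟩
  intro K hKc _hKcv hKint hpos x
  obtain ⟨z0, hz0⟩ := hKint
  have hne : K.Nonempty := ⟨z0, interior_subset hz0⟩
  have hintg_h : Integrable (fun y : Sph n => sfn K (y : Eu n)) (sphMeas n) :=
    integrable_cont _ ((sfn_continuous hKc hne).comp continuous_subtype_val)
  have havg : ⨍ y : Sph n, sfn K (y : Eu n) ∂sphMeas n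
      = T⁻¹ * ∫ y : Sph n, sfn K (y : Eu n) ∂sphMeas n := by
    rw [average_eq, hT, smul_eq_mul, measureReal_def]
  have hInn : 0 ≤ ∫ y : Sph n, sfn K (y : Eu n) ∂sphMeas n :=
    integral_nonneg fun y => hpos y
  obtain ⟨y₀, hy₀K, hmax⟩ := sfn_exists_max hKc hne (x : Eu n)
  by_cases hx0 : sfn K (x : Eu n) ≤ 0
  · calc m / T * sfn K (x : Eu n) ≤ 0 :=
          mul_nonpos_of_nonneg_of_nonpos (div_pos hmpos hTpos).le hx0
      _ ≤ ⨍ y : Sph n, sfn K (y : Eu n) ∂sphMeas n := by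
          rw [havg]; positivity
  · push_neg at hx0
    have hy₀ne : y₀ ≠ 0 := by
      intro h
      rw [h, inner_zero_right] at hmax
      linarith [hmax ▸ hx0]
    set u : Eu n := ‖y₀‖⁻¹ • y₀ with hu
    have hun : ‖u‖ = 1 := by
      rw [hu]; exact norm_smul_inv_norm hy₀ne
    have hpt : ∀ y : Sph n, ‖y₀‖ * max 0 ⟪(y : Eu n), u⟫_ℝ ≤ sfn K (y : Eu n) := by
      intro y
      have h1 : ‖y₀‖ * max 0 ⟪(y : Eu n), u⟫_ℝ = max 0 ⟪(y : Eu n), y₀⟫_ℝ := by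
        rw [mul_max_of_nonneg _ _ (norm_nonneg y₀), mul_zero]
        congr 1
        rw [hu, real_inner_smul_right]
        field_simp
      rw [h1]
      exact max_le (hpos y) (sfn_le_inner hKc hy₀K _)
    have hcontg : Continuous fun y : Sph n => max 0 ⟪(y : Eu n), u⟫_ℝ :=
      continuous_const.max (Continuous.inner continuous_subtype_val continuous_const)
    have hintg_g : Integrable (fun y : Sph n => ‖y₀‖ * max 0 ⟪(y : Eu n), u⟫_ℝ) (sphMeas n) :=
      (integrable_cont _ hcontg).const_mul _
    have hmono : ∫ y : Sph n, ‖y₀‖ * max 0 ⟪(y : Eu n), u⟫_ℝ ∂sphMeas n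
        ≤ ∫ y : Sph n, sfn K (y : Eu n) ∂sphMeas n :=
      integral_mono hintg_g hintg_h hpt
    have hsplit : ∫ y : Sph n, ‖y₀‖ * max 0 ⟪(y : Eu n), u⟫_ℝ ∂sphMeas n
        = ‖y₀‖ * ∫ y : Sph n, max 0 ⟪(y : Eu n), u⟫_ℝ ∂sphMeas n :=
      integral_const_mul _ _
    have hcap := int_cap_lb n u hun
    have hxle : sfn K (x : Eu n) ≤ ‖y₀‖ := by
      rw [hmax]
      have := real_inner_le_norm (x : Eu n) y₀
      have hx1 : ‖(x : Eu n)‖ = 1 := mem_sphere_zero_iff_norm.mp x.2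
      rw [hx1, one_mul] at this
      exact this
    have hIm : sfn K (x : Eu n) * m ≤ ∫ y : Sph n, sfn K (y : Eu n) ∂sphMeas n := by
      have h6 : ‖y₀‖ * m ≤ ‖y₀‖ * ∫ y : Sph n, max 0 ⟪(y : Eu n), u⟫_ℝ ∂sphMeas n :=
        mul_le_mul_of_nonneg_left hcap (norm_nonneg _)
      have h7 : sfn K (x : Eu n) * m ≤ ‖y₀‖ * m :=
        mul_le_mul_of_nonneg_right hxle hmpos.le
      linarith [hsplit ▸ hmono]
    rw [havg]
    calc m / T * sfn K (x : Eu n) = (sfn K (x : Eu n) * m) / T := by ring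
      _ ≤ (∫ y : Sph n, sfn K (y : Eu n) ∂sphMeas n) / T := by gcongr
      _ = T⁻¹ * ∫ y : Sph n, sfn K (y : Eu n) ∂sphMeas n := by ring
end
end

section
/- Let n ≥ 1. There exists a constant C > 0 depending only on n with the following property: for every convex body K in ℝ^{n+1} whose support function h is nonnegative on S^n (equivalently, 0 ∈ K), one has (⨍_{S^n} h² dθ)^{1/2} ≤ C · ⨍_{S^n} h dθ. -/
open MeasureTheory Metric Real
open scoped InnerProductSpace ENNReal Topology

noncomputable section

open scoped Pointwise

namespace SphAux

instance (n : ℕ) : MeasureTheory.IsFiniteMeasure (sphMeas n) := by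
  unfold sphMeas; infer_instance

lemma sphMeas_univ_pos (n : ℕ) : 0 < sphMeas n Set.univ := by
  rw [sphMeas, MeasureTheory.Measure.toSphere_apply_univ]
  refine ENNReal.mul_pos ?_ (measure_ball_pos _ _ one_pos).ne'
  simp [finrank_euclideanSpace_fin]

lemma le_sfn {n : ℕ} {K : Set (Eu n)} (hK : IsCompact K) {x y : Eu n} (hy : y ∈ K) :
    ⟪x, y⟫_ℝ ≤ sfn K x :=
  le_csSup ((hK.image (continuous_const.inner continuous_id)).bddAbove) ⟨y, hy, rfl⟩

lemma sfn_le {n : ℕ} {K : Set (Eu n)} (hne : K.Nonempty) {x : Eu n} {a : ℝ}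
    (h : ∀ y ∈ K, ⟪x, y⟫_ℝ ≤ a) : sfn K x ≤ a :=
  csSup_le (hne.image _) (by rintro _ ⟨y, hy, rfl⟩; exact h y hy)

lemma cont_integrable (n : ℕ) (f : Sph n → ℝ) (hf : Continuous f) :
    MeasureTheory.Integrable f (sphMeas n) :=
  hf.integrable_of_hasCompactSupport (HasCompactSupport.of_compactSpace f)

lemma hemisphere_pos (n : ℕ) {u : Eu n} (hu : ‖u‖ = 1) :
    0 < sphMeas n {x : Sph n | 0 < ⟪(x : Eu n), u⟫_ℝ} := by
  have hcont : Continuous fun x : Sph n => ⟪(x : Eu n), u⟫_ℝ :=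
    (continuous_subtype_val.inner continuous_const)
  have hopen : IsOpen {x : Sph n | 0 < ⟪(x : Eu n), u⟫_ℝ} := isOpen_Ioi.preimage hcont
  rw [sphMeas, (volume : MeasureTheory.Measure (Eu n)).toSphere_apply' hopen.measurableSet]
  have hset : Set.Ioo (0 : ℝ) 1 • (Subtype.val '' {x : Sph n | 0 < ⟪(x : Eu n), u⟫_ℝ})
      = Metric.ball (0 : Eu n) 1 ∩ {y : Eu n | 0 < ⟪y, u⟫_ℝ} := by
    ext y
    constructor
    · rintro ⟨r, hr, _, ⟨x, hx, rfl⟩, rfl⟩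
      have hx1 : ‖(x : Eu n)‖ = 1 := by simpa using x.2
      constructor
      · simp only [mem_ball, dist_zero_right, norm_smul, hx1, Real.norm_eq_abs,
          abs_of_pos hr.1, mul_one]
        exact hr.2
      · simp only [Set.mem_setOf_eq, real_inner_smul_left]
        exact mul_pos hr.1 hx
    · rintro ⟨hy1, hy2⟩
      have hy0 : y ≠ 0 := by rintro rfl; simp at hy2
      have hny : 0 < ‖y‖ := norm_pos_iff.mpr hy0
      have hz : (‖y‖⁻¹ • y : Eu n) ∈ Metric.sphere (0 : Eu n) 1 := by
        simp [norm_smul, abs_of_pos (inv_pos.mpr hny), inv_mul_cancel₀ hny.ne']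
      refine ⟨‖y‖, ⟨hny, by simpa [dist_zero_right] using hy1⟩,
        (‖y‖⁻¹ • y : Eu n), ⟨(⟨‖y‖⁻¹ • y, hz⟩ : Sph n), ?_, rfl⟩, ?_⟩
      · simp only [Set.mem_setOf_eq, real_inner_smul_left]
        exact mul_pos (inv_pos.mpr hny) hy2
      · show ‖y‖ • (‖y‖⁻¹ • y) = y
        rw [smul_smul, mul_inv_cancel₀ hny.ne', one_smul]
  rw [hset]
  refine ENNReal.mul_pos (by simp [finrank_euclideanSpace_fin]) ?_
  refine ((Metric.isOpen_ball.inter (isOpen_lt continuous_const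
    (continuous_id.inner continuous_const))).measure_pos volume ?_).ne'
  refine ⟨(2⁻¹ : ℝ) • u, ?_, ?_⟩
  · simp only [mem_ball, dist_zero_right, norm_smul, hu, Real.norm_eq_abs]
    rw [abs_of_pos]; norm_num; norm_num
  · show 0 < ⟪((2 : ℝ)⁻¹ • u : Eu n), u⟫_ℝ
    rw [real_inner_smul_left, real_inner_self_eq_norm_mul_norm, hu]
    norm_num

lemma cfun_cont (n : ℕ) :
    Continuous fun u : Eu n => ∫ x : Sph n, max ⟪(x : Eu n), u⟫_ℝ 0 ∂sphMeas n := by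
  have hcont : ∀ u : Eu n, Continuous fun x : Sph n => max ⟪(x : Eu n), u⟫_ℝ 0 :=
    fun u => (continuous_subtype_val.inner continuous_const).max continuous_const
  have hMpos : 0 < (sphMeas n Set.univ).toReal :=
    ENNReal.toReal_pos (sphMeas_univ_pos n).ne' (MeasureTheory.measure_ne_top _ _)
  rw [Metric.continuous_iff]
  intro u ε hε
  refine ⟨ε / (sphMeas n Set.univ).toReal, by positivity, fun v hv => ?_⟩
  have key : dist (∫ x : Sph n, max ⟪(x : Eu n), v⟫_ℝ 0 ∂sphMeas n)
      (∫ x : Sph n, max ⟪(x : Eu n), u⟫_ℝ 0 ∂sphMeas n) ≤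
      dist v u * (sphMeas n Set.univ).toReal := by
    rw [dist_eq_norm, ← MeasureTheory.integral_sub (cont_integrable n _ (hcont v))
      (cont_integrable n _ (hcont u))]
    refine MeasureTheory.norm_integral_le_of_norm_le_const
      (Filter.Eventually.of_forall fun x => ?_)
    have h1 : |max ⟪(x : Eu n), v⟫_ℝ 0 - max ⟪(x : Eu n), u⟫_ℝ 0| ≤
        |⟪(x : Eu n), v⟫_ℝ - ⟪(x : Eu n), u⟫_ℝ| := abs_max_sub_max_le_abs _ _ _
    rw [Real.norm_eq_abs]
    refine h1.trans ?_
    rw [← inner_sub_right]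
    have h2 := abs_real_inner_le_norm (x : Eu n) (v - u)
    have hx1 : ‖(x : Eu n)‖ = 1 := by simpa using x.2
    rw [hx1, one_mul] at h2
    rw [dist_eq_norm]
    exact h2
  calc dist _ _ ≤ dist v u * (sphMeas n Set.univ).toReal := key
    _ < (ε / (sphMeas n Set.univ).toReal) * (sphMeas n Set.univ).toReal :=
        mul_lt_mul_of_pos_right hv hMpos
    _ = ε := by field_simp

lemma cfun_min (n : ℕ) : ∃ c₀ : ℝ, 0 < c₀ ∧ ∀ u : Eu n, ‖u‖ = 1 →
    c₀ ≤ ∫ x : Sph n, max ⟪(x : Eu n), u⟫_ℝ 0 ∂sphMeas n := by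
  obtain ⟨u₁, hu₁⟩ := exists_norm_eq (Eu n) (zero_le_one' ℝ)
  have hne : (Metric.sphere (0 : Eu n) 1).Nonempty := ⟨u₁, by simpa using hu₁⟩
  obtain ⟨u₀, hu₀mem, hmin⟩ := (isCompact_sphere (0 : Eu n) 1).exists_isMinOn hne
    (cfun_cont n).continuousOn
  have hu₀ : ‖u₀‖ = 1 := by simpa using hu₀mem
  refine ⟨_, ?_, fun u hu => hmin (by simpa using hu)⟩
  have hnonneg : 0 ≤ fun x : Sph n => max ⟪(x : Eu n), u₀⟫_ℝ 0 :=
    fun x => le_max_right _ _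
  rw [MeasureTheory.integral_pos_iff_support_of_nonneg hnonneg
    (cont_integrable n _ ((continuous_subtype_val.inner continuous_const).max continuous_const))]
  refine lt_of_lt_of_le (hemisphere_pos n hu₀) (MeasureTheory.measure_mono ?_)
  intro x hx
  simp only [Set.mem_setOf_eq] at hx
  simp only [Function.mem_support]
  positivity

lemma sfn_sphere_continuous {n : ℕ} {K : Set (Eu n)} (hK : IsCompact K)
    (hne : K.Nonempty) : Continuous fun x : Sph n => sfn K (x : Eu n) := by
  obtain ⟨y0, hy0K, hy0max⟩ := hK.exists_isMaxOn hne continuous_norm.continuousOn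
  set R := ‖y0‖ with hR
  have hstep : ∀ x z : Eu n, sfn K x - sfn K z ≤ R * ‖x - z‖ := by
    intro x z
    rw [sub_le_iff_le_add]
    refine sfn_le hne fun y hy => ?_
    have hxy : ⟪x, y⟫_ℝ = ⟪z, y⟫_ℝ + ⟪x - z, y⟫_ℝ := by
      rw [← inner_add_left]; congr 1; abel
    rw [hxy]
    have h1 : ⟪z, y⟫_ℝ ≤ sfn K z := le_sfn hK hy
    have h2 : ⟪x - z, y⟫_ℝ ≤ ‖x - z‖ * ‖y‖ := real_inner_le_norm _ _
    have h3 : ‖y‖ ≤ R := hy0max hy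
    nlinarith [norm_nonneg (x - z)]
  have hlip : LipschitzWith R.toNNReal (sfn K) := by
    rw [lipschitzWith_iff_dist_le_mul]
    intro x z
    rw [dist_eq_norm, dist_eq_norm, Real.coe_toNNReal R (norm_nonneg y0),
      Real.norm_eq_abs, abs_le]
    constructor
    · have := hstep z x
      rw [norm_sub_rev (z : Eu n) x] at this
      linarith
    · exact hstep x z
  exact hlip.continuous.comp continuous_subtype_val

end SphAux


/-- There is `C = C(n) > 0` such that, for every convex body `K` with nonnegative
support function on `S^n`, one has `(⨍ h² dθ)^{1/2} ≤ C ⨍ h dθ`. -/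
theorem L2_average_le_average (n : ℕ) (hn : 1 ≤ n) :
    ∃ C : ℝ, 0 < C ∧
      ∀ K : Set (Eu n), IsCompact K → Convex ℝ K → (interior K).Nonempty →
        (∀ x : Sph n, 0 ≤ sfn K (x : Eu n)) →
        Real.sqrt (⨍ x : Sph n, sfn K (x : Eu n) ^ 2 ∂sphMeas n) ≤
          C * ⨍ x : Sph n, sfn K (x : Eu n) ∂sphMeas n := by
  obtain ⟨c₀, hc₀, hc₀min⟩ := SphAux.cfun_min n
  set M : ℝ := (sphMeas n Set.univ).toReal with hM
  have hMpos : 0 < M := ENNReal.toReal_pos (SphAux.sphMeas_univ_pos n).ne' (measure_ne_top _ _)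
  refine ⟨M / c₀, by positivity, fun K hK hconv hint h0 => ?_⟩
  have hne : K.Nonempty := Set.Nonempty.mono interior_subset hint
  obtain ⟨y0, hy0K, hy0max⟩ := hK.exists_isMaxOn hne continuous_norm.continuousOn
  set R := ‖y0‖ with hRdef
  have hR0 : 0 ≤ R := norm_nonneg _
  have hcont := SphAux.sfn_sphere_continuous hK hne
  have hInt : Integrable (fun x : Sph n => sfn K (x : Eu n)) (sphMeas n) :=
    SphAux.cont_integrable n _ hcont
  have hInt2 : Integrable (fun x : Sph n => sfn K (x : Eu n) ^ 2) (sphMeas n) :=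
    SphAux.cont_integrable n _ (hcont.pow 2)
  have hbound : ∀ x : Sph n, sfn K (x : Eu n) ≤ R := by
    intro x
    refine SphAux.sfn_le hne fun y hy => ?_
    have h2 : ⟪(x : Eu n), y⟫_ℝ ≤ ‖(x : Eu n)‖ * ‖y‖ := real_inner_le_norm _ _
    have hx1 : ‖(x : Eu n)‖ = 1 := by simpa using x.2
    rw [hx1, one_mul] at h2
    exact h2.trans (hy0max hy)
  -- Step 1 : sqrt of the average of h² is at most R
  have step1 : Real.sqrt (⨍ x : Sph n, sfn K (x : Eu n) ^ 2 ∂sphMeas n) ≤ R := by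
    have havg : (⨍ x : Sph n, sfn K (x : Eu n) ^ 2 ∂sphMeas n) ≤ R ^ 2 := by
      rw [average_eq, smul_eq_mul, measureReal_def, ← hM]
      have hle : (∫ x : Sph n, sfn K (x : Eu n) ^ 2 ∂sphMeas n) ≤ R ^ 2 * M := by
        have := integral_mono hInt2 (integrable_const (R ^ 2))
          (fun x => pow_le_pow_left₀ (h0 x) (hbound x) 2)
        rwa [integral_const, smul_eq_mul, mul_comm, measureReal_def, ← hM] at this
      calc M⁻¹ * (∫ x : Sph n, sfn K (x : Eu n) ^ 2 ∂sphMeas n)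
          ≤ M⁻¹ * (R ^ 2 * M) := by
            exact mul_le_mul_of_nonneg_left hle (inv_nonneg.mpr hMpos.le)
        _ = R ^ 2 := by field_simp
    calc Real.sqrt _ ≤ Real.sqrt (R ^ 2) := Real.sqrt_le_sqrt havg
      _ = R := by rw [Real.sqrt_sq hR0]
  -- Step 2 : the integral of h is at least R * c₀
  have step2 : R * c₀ ≤ ∫ x : Sph n, sfn K (x : Eu n) ∂sphMeas n := by
    rcases eq_or_lt_of_le hR0 with hR | hR
    · rw [← hR, zero_mul]
      exact integral_nonneg h0
    · set u : Eu n := R⁻¹ • y0 with hu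
      have hunorm : ‖u‖ = 1 := by
        rw [hu, norm_smul, Real.norm_eq_abs, abs_of_pos (inv_pos.mpr hR), ← hRdef,
          inv_mul_cancel₀ hR.ne']
      have hmaxeq : ∀ x : Sph n, max ⟪(x : Eu n), y0⟫_ℝ 0 = R * max ⟪(x : Eu n), u⟫_ℝ 0 := by
        intro x
        rw [hu, real_inner_smul_right, mul_max_of_nonneg _ _ hR0, mul_zero, ← mul_assoc,
          mul_inv_cancel₀ hR.ne', one_mul]
      have hIu : Integrable (fun x : Sph n => max ⟪(x : Eu n), u⟫_ℝ 0) (sphMeas n) :=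
        SphAux.cont_integrable n _ ((continuous_subtype_val.inner continuous_const).max continuous_const)
      have hIy : Integrable (fun x : Sph n => max ⟪(x : Eu n), y0⟫_ℝ 0) (sphMeas n) :=
        SphAux.cont_integrable n _ ((continuous_subtype_val.inner continuous_const).max continuous_const)
      have key : (∫ x : Sph n, max ⟪(x : Eu n), y0⟫_ℝ 0 ∂sphMeas n)
          = R * ∫ x : Sph n, max ⟪(x : Eu n), u⟫_ℝ 0 ∂sphMeas n := by
        rw [← integral_const_mul]
        exact integral_congr_ae (Filter.Eventually.of_forall hmaxeq)
      have hmono : (∫ x : Sph n, max ⟪(x : Eu n), y0⟫_ℝ 0 ∂sphMeas n)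
          ≤ ∫ x : Sph n, sfn K (x : Eu n) ∂sphMeas n :=
        integral_mono hIy hInt fun x => max_le (SphAux.le_sfn hK hy0K) (h0 x)
      have := hc₀min u hunorm
      nlinarith
  -- conclude
  refine step1.trans ?_
  rw [average_eq, smul_eq_mul, measureReal_def, ← hM]
  have h1 : (M / c₀) * (M⁻¹ * (R * c₀)) = R := by field_simp
  rw [← h1]
  apply mul_le_mul_of_nonneg_left _ (by positivity)
  exact mul_le_mul_of_nonneg_left step2 (inv_nonneg.mpr hMpos.le)
end
end
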